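/- arXiv:2407.18929 — 3 statements merged into one kernel-verified Lean document; each statement's English description precedes it below -/
import Mathlib

section
/- Let n ≥ 1, τ > 0 and g ∈ ℝⁿ be fixed, and let GS be the Gumbel-softmax map GS(x)_i = exp((x_i+g_i)/τ) / Σ_{j=1}^{n} exp((x_j+g_j)/τ). Let f : ℝⁿ → ℝ be differentiable at y = GS(x). If x is a critical point of L = f ∘ GS, i.e. all partial derivatives of L vanish at x, then for every index i one has y_i · Σ_{j≠i} y_j · (∂f/∂y_i (y) − ∂f/∂y_j (y)) = 0. -/
open Real Finset

private lemma aux1 (A S T : ℝ) (hS : S ≠ 0) (hT : T ≠ 0) :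
    A * (-(S ^ 2)⁻¹ * (A * T⁻¹)) + S⁻¹ * (A * (T⁻¹ * 1)) = A / S / T * (1 - A / S) := by
  field_simp
  ring

private lemma aux2 (A B S T : ℝ) (hS : S ≠ 0) (hT : T ≠ 0) :
    B * (-(S ^ 2)⁻¹ * (A * T⁻¹)) + S⁻¹ * (B * (T⁻¹ * 0)) = A / S / T * (0 - B / S) := by
  field_simp
  ring

/-- With `GS` the Gumbel-softmax map, `f` differentiable at `y = GS(x)`, if `x` is
a critical point of `L = f ∘ GS` (all partial derivatives of `L` vanish at `x`), then for every
index `i`, `y_i · ∑_{j≠i} y_j · (∂f/∂y_i (y) − ∂f/∂y_j (y)) = 0`. -/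
theorem stmt2 (n : ℕ) (hn : 1 ≤ n) (τ : ℝ) (hτ : 0 < τ) (g : Fin n → ℝ)
    (GS : (Fin n → ℝ) → (Fin n → ℝ))
    (hGS : ∀ x i, GS x i =
      Real.exp ((x i + g i) / τ) / ∑ j : Fin n, Real.exp ((x j + g j) / τ))
    (f : (Fin n → ℝ) → ℝ) (x y : Fin n → ℝ) (hy : y = GS x)
    (hf : DifferentiableAt ℝ f y)
    (hcrit : ∀ i : Fin n, fderiv ℝ (f ∘ GS) x (Pi.single i 1) = 0) :
    ∀ i : Fin n,
      y i * ∑ j ∈ Finset.univ.erase i,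
        y j * (fderiv ℝ f y (Pi.single i 1) - fderiv ℝ f y (Pi.single j 1)) = 0 := by
  intro i
  set a : Fin n → ℝ := fun j => Real.exp ((x j + g j) / τ) with ha
  set s : ℝ := ∑ j, a j with hs
  have hspos : 0 < s := Finset.sum_pos (fun j _ => Real.exp_pos _)
    ⟨⟨0, hn⟩, Finset.mem_univ _⟩
  have hs0 : s ≠ 0 := ne_of_gt hspos
  -- derivatives of the numerators
  have hnum : ∀ k : Fin n, HasFDerivAt (fun z : Fin n → ℝ => Real.exp ((z k + g k) / τ))
      (Real.exp ((x k + g k) / τ) • (τ⁻¹ • (ContinuousLinearMap.proj k :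
        (Fin n → ℝ) →L[ℝ] ℝ))) x := by
    intro k
    have h1 : HasFDerivAt (fun z : Fin n → ℝ => (z k + g k) / τ)
        (τ⁻¹ • (ContinuousLinearMap.proj k : (Fin n → ℝ) →L[ℝ] ℝ)) x := by
      simpa [div_eq_inv_mul] using ((hasFDerivAt_apply k x).add_const (g k)).const_mul τ⁻¹
    exact h1.exp
  -- derivative of the denominator
  have hS : HasFDerivAt (fun z : Fin n → ℝ => ∑ j, Real.exp ((z j + g j) / τ))
      (∑ j, Real.exp ((x j + g j) / τ) • (τ⁻¹ • (ContinuousLinearMap.proj j :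
        (Fin n → ℝ) →L[ℝ] ℝ))) x :=
    HasFDerivAt.fun_sum (fun j _ => hnum j)
  set S' : (Fin n → ℝ) →L[ℝ] ℝ := ∑ j, Real.exp ((x j + g j) / τ) • (τ⁻¹ •
    (ContinuousLinearMap.proj j : (Fin n → ℝ) →L[ℝ] ℝ)) with hS'
  -- derivative of the inverse of the denominator
  have hinv : HasFDerivAt (fun z : Fin n → ℝ => (∑ j, Real.exp ((z j + g j) / τ))⁻¹)
      ((-(s ^ 2)⁻¹) • S') x := by
    have := (hasDerivAt_inv hs0).comp_hasFDerivAt x hS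
    exact this
  -- component derivatives of GS
  set D : Fin n → ((Fin n → ℝ) →L[ℝ] ℝ) := fun k =>
    a k • ((-(s ^ 2)⁻¹) • S') + s⁻¹ • (a k • (τ⁻¹ • (ContinuousLinearMap.proj k :
      (Fin n → ℝ) →L[ℝ] ℝ))) with hD
  have hGSk : ∀ k : Fin n, HasFDerivAt (fun z => GS z k) (D k) x := by
    intro k
    have heq : (fun z => GS z k) =
        fun z : Fin n → ℝ => Real.exp ((z k + g k) / τ) *
          (∑ j, Real.exp ((z j + g j) / τ))⁻¹ := by
      funext z; rw [hGS, div_eq_mul_inv]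
    rw [heq]
    exact (hnum k).mul hinv
  have hGSd : HasFDerivAt GS (ContinuousLinearMap.pi D) x := by
    have : GS = fun z k => GS z k := rfl
    rw [this]
    exact hasFDerivAt_pi.2 hGSk
  subst hy
  have hcomp : HasFDerivAt (f ∘ GS) ((fderiv ℝ f (GS x)).comp (ContinuousLinearMap.pi D)) x :=
    hf.hasFDerivAt.comp x hGSd
  set F : (Fin n → ℝ) →L[ℝ] ℝ := fderiv ℝ f (GS x) with hF
  -- key: value of D at single i 1
  have hyv : ∀ j, GS x j = a j / s := fun j => hGS x j
  have hDe : (ContinuousLinearMap.pi D) (Pi.single i 1) =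
      (GS x i / τ) • (Pi.single i 1 - GS x) := by
    funext k
    simp only [ContinuousLinearMap.pi_apply, hD, ContinuousLinearMap.add_apply,
      ContinuousLinearMap.smul_apply, hS', ContinuousLinearMap.sum_apply,
      ContinuousLinearMap.proj_apply, Pi.smul_apply, Pi.sub_apply, smul_eq_mul]
    have hs'e : ∑ j, Real.exp ((x j + g j) / τ) * (τ⁻¹ * (Pi.single i 1 : Fin n → ℝ) j)
        = a i * τ⁻¹ := by
      rw [Finset.sum_eq_single i]
      · simp [ha]
      · intro b _ hb; simp [Pi.single_eq_of_ne hb]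
      · simp
    rw [hs'e, hyv i, hyv k]
    by_cases hk : k = i
    · subst hk
      rw [Pi.single_eq_same]
      exact aux1 (a k) s τ hs0 (ne_of_gt hτ)
    · rw [Pi.single_eq_of_ne hk]
      exact aux2 (a i) (a k) s τ hs0 (ne_of_gt hτ)
  -- the critical point condition, rewritten
  have hz : GS x i / τ * (F (Pi.single i 1) - F (GS x)) = 0 := by
    have h1 := hcrit i
    rw [hcomp.fderiv] at h1
    have h2 : F ((ContinuousLinearMap.pi D) (Pi.single i 1)) = 0 := h1
    rw [hDe] at h2
    simpa [map_sub] using h2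
  have hkey : GS x i * (F (Pi.single i 1) - F (GS x)) = 0 := by
    rcases mul_eq_zero.1 hz with h | h
    · rcases div_eq_zero_iff.1 h with h' | h'
      · rw [h']; ring
      · exact absurd h' (ne_of_gt hτ)
    · rw [h]; ring
  -- sum of GS x equals 1
  have hsum1 : ∑ j, GS x j = 1 := by
    simp_rw [hyv]
    rw [← Finset.sum_div, ← hs, div_self hs0]
  -- F (GS x) = ∑ j, GS x j * F (single j 1)
  have hdecomp : GS x = ∑ j, GS x j • (Pi.single j 1 : Fin n → ℝ) := by
    funext k
    rw [Finset.sum_apply, Finset.sum_eq_single k]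
    · simp
    · intro b _ hb; simp [Pi.single_eq_of_ne (Ne.symm hb)]
    · simp
  have hFy : F (GS x) = ∑ j, GS x j * F (Pi.single j 1) := by
    conv_lhs => rw [hdecomp]
    rw [map_sum]
    refine Finset.sum_congr rfl fun j _ => ?_
    rw [map_smul, smul_eq_mul]
  -- algebraic rearrangement
  have herase : ∑ j ∈ Finset.univ.erase i,
      GS x j * (F (Pi.single i 1) - F (Pi.single j 1)) =
      F (Pi.single i 1) - F (GS x) := by
    have h1 : ∑ j ∈ Finset.univ.erase i, GS x j = 1 - GS x i := by
      rw [Finset.sum_erase_eq_sub (Finset.mem_univ i), hsum1]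
    have h2 : ∑ j ∈ Finset.univ.erase i, GS x j * F (Pi.single j 1)
        = F (GS x) - GS x i * F (Pi.single i 1) := by
      rw [Finset.sum_erase_eq_sub (Finset.mem_univ i), ← hFy]
    calc ∑ j ∈ Finset.univ.erase i, GS x j * (F (Pi.single i 1) - F (Pi.single j 1))
        = (∑ j ∈ Finset.univ.erase i, GS x j) * F (Pi.single i 1)
          - ∑ j ∈ Finset.univ.erase i, GS x j * F (Pi.single j 1) := by
          rw [Finset.sum_mul, ← Finset.sum_sub_distrib]; exact Finset.sum_congr rfl fun j _ => by ring
      _ = F (Pi.single i 1) - F (GS x) := by rw [h1, h2]; ring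
  rw [herase]
  exact hkey
end

section
/- For every t ∈ ℝ, the convolution-type integral expressing the distribution of the difference of two independent standard Gumbel variables evaluates to the logistic CDF: ∫_{−∞}^{∞} exp(−exp(−(y+t))) · exp(−y − exp(−y)) dy = 1/(1 + exp(−t)). -/
open Real MeasureTheory Filter Set Topology

/-- For every `t ∈ ℝ`, the convolution-type integral expressing the distribution of
the difference of two independent standard Gumbel variables evaluates to the logistic CDF:
`∫ exp(−exp(−(y+t))) · exp(−y − exp(−y)) dy = 1/(1 + exp(−t))`. -/
theorem stmt9 (t : ℝ) :
    ∫ y : ℝ, Real.exp (-Real.exp (-(y + t))) * Real.exp (-y - Real.exp (-y)) =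
      1 / (1 + Real.exp (-t)) := by
  set c : ℝ := 1 + Real.exp (-t) with hc_def
  have hc : 0 < c := by positivity
  set f' : ℝ → ℝ := fun y => Real.exp (-y) * Real.exp (-c * Real.exp (-y)) with hf'_def
  set F : ℝ → ℝ := fun y => c⁻¹ * Real.exp (-c * Real.exp (-y)) with hF_def
  have hderiv : ∀ y, HasDerivAt F (f' y) y := by
    intro y
    have h2 : HasDerivAt (fun y : ℝ => Real.exp (-y)) (-Real.exp (-y)) y := by
      exact ((Real.hasDerivAt_exp (-y)).comp y ((hasDerivAt_id y).neg)).congr_deriv (by simp)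
    have h3 : HasDerivAt (fun y : ℝ => -c * Real.exp (-y)) (c * Real.exp (-y)) y := by
      have := h2.const_mul (-c)
      exact this.congr_deriv (by ring)
    have h4 := (Real.hasDerivAt_exp (-c * Real.exp (-y))).comp y h3
    have h5 := h4.const_mul c⁻¹
    refine h5.congr_deriv ?_
    simp only [hf'_def]
    linear_combination (Real.exp (-c * Real.exp (-y)) * Real.exp (-y)) * (inv_mul_cancel₀ hc.ne')
  have hnonneg : ∀ y : ℝ, 0 ≤ f' y := fun y => by positivity
  have hcont : Continuous f' := by fun_prop
  have htop : Tendsto F atTop (𝓝 c⁻¹) := by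
    have e0 : Tendsto (fun y : ℝ => Real.exp (-y)) atTop (𝓝 0) :=
      Real.tendsto_exp_neg_atTop_nhds_zero
    have e1 : Tendsto (fun y : ℝ => -c * Real.exp (-y)) atTop (𝓝 (-c * 0)) := e0.const_mul (-c)
    have e2 := (Real.continuous_exp.tendsto _).comp e1
    have e3 := e2.const_mul c⁻¹
    simpa [hF_def, neg_mul] using e3
  have hbot : Tendsto F atBot (𝓝 0) := by
    have e0 : Tendsto (fun y : ℝ => Real.exp (-y)) atBot atTop :=
      Real.tendsto_exp_atTop.comp tendsto_neg_atBot_atTop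
    have e1 : Tendsto (fun y : ℝ => c * Real.exp (-y)) atBot atTop := e0.const_mul_atTop hc
    have e2 : Tendsto (fun y : ℝ => -c * Real.exp (-y)) atBot atBot := by
      simpa [Function.comp_def, neg_mul] using tendsto_neg_atTop_atBot.comp e1
    have e3 := (Real.tendsto_exp_atBot.comp e2).const_mul c⁻¹
    simpa [hF_def, Function.comp_def, neg_mul] using e3
  have hIoi : IntegrableOn f' (Ioi 0) := by
    exact integrableOn_Ioi_deriv_of_nonneg' (fun x _ => hderiv x) (fun x _ => hnonneg x) htop
  have hFle : ∀ y : ℝ, F y ≤ c⁻¹ := by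
    intro y
    rw [hF_def]
    have : Real.exp (-c * Real.exp (-y)) ≤ 1 := by
      apply Real.exp_le_one_iff.2
      have : 0 ≤ c * Real.exp (-y) := by positivity
      linarith
    calc c⁻¹ * Real.exp (-c * Real.exp (-y)) ≤ c⁻¹ * 1 := by
          apply mul_le_mul_of_nonneg_left this (by positivity)
      _ = c⁻¹ := mul_one _
  have hFpos : ∀ y : ℝ, 0 ≤ F y := fun y => by rw [hF_def]; positivity
  have hIic : IntegrableOn f' (Iic 0) := by
    have ha : Tendsto (fun n : ℕ => -(n : ℝ)) atTop atBot :=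
      tendsto_neg_atTop_atBot.comp tendsto_natCast_atTop_atTop
    apply integrableOn_Iic_of_intervalIntegral_norm_bounded (μ := volume) c⁻¹ 0
      (fun i => hcont.integrableOn_Ioc) ha
    filter_upwards with i
    have hftc : ∫ x in (-(i : ℝ))..0, f' x = F 0 - F (-(i : ℝ)) := by
      apply intervalIntegral.integral_eq_sub_of_hasDerivAt (fun x _ => hderiv x)
      exact (hcont.intervalIntegrable _ _)
    have hnorm : ∫ x in (-(i : ℝ))..0, ‖f' x‖ = ∫ x in (-(i : ℝ))..0, f' x := by
      apply intervalIntegral.integral_congr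
      intro x _
      exact Real.norm_of_nonneg (hnonneg x)
    rw [hnorm, hftc]
    have := hFle 0
    have := hFpos (-(i : ℝ))
    linarith
  have hInt : Integrable f' := by
    rw [← integrableOn_univ, ← Set.Iic_union_Ioi (a := (0 : ℝ))]
    exact hIic.union hIoi
  have key : ∫ y, f' y = c⁻¹ - 0 := integral_of_hasDerivAt_of_tendsto hderiv hInt hbot htop
  have heq : (fun y : ℝ => Real.exp (-Real.exp (-(y + t))) * Real.exp (-y - Real.exp (-y))) = f' := by
    funext y
    simp only [hf'_def]
    rw [← Real.exp_add, ← Real.exp_add]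
    congr 1
    rw [show -(y + t) = -t + -y by ring, Real.exp_add, hc_def]
    ring
  rw [heq, key]
  rw [hc_def]
  field_simp
  ring
end

section
/- Let (Ω, ℱ, P) be a probability space and let X, Y : Ω → ℝ be independent random variables, each distributed according to the measure on ℝ with density x ↦ exp(−x − exp(−x)) with respect to Lebesgue measure (the standard Gumbel distribution). Then the difference X − Y follows the Logistic(0,1) distribution: for every t ∈ ℝ, P(X − Y ≤ t) = 1/(1 + exp(−t)). -/
open Real MeasureTheory ProbabilityTheory Filter Set

namespace Stmt10Aux

noncomputable def f (x : ℝ) : ℝ := Real.exp (-x - Real.exp (-x))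

noncomputable def gumbel : Measure ℝ :=
  volume.withDensity (fun x => ENNReal.ofReal (f x))

lemma f_pos (x : ℝ) : 0 < f x := Real.exp_pos _

lemma f_cont : Continuous f := by
  unfold f; fun_prop

lemma f_meas : Measurable fun x => ENNReal.ofReal (f x) :=
  (f_cont.measurable).ennreal_ofReal

lemma gumbel_ne_zero : gumbel ≠ 0 := by
  intro h
  have h1 : gumbel Set.univ = 0 := by rw [h]; simp
  rw [gumbel, withDensity_apply _ MeasurableSet.univ, setLIntegral_univ] at h1
  rw [lintegral_eq_zero_iff f_meas] at h1
  have h2 : {x : ℝ | ¬ (ENNReal.ofReal (f x) = (0 : ENNReal) )} = Set.univ := by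
    ext x
    simp [ENNReal.ofReal_eq_zero, not_le, f_pos x]
  have := h1
  rw [Filter.EventuallyEq, ae_iff] at this
  simp only [Pi.zero_apply] at this
  rw [h2] at this
  simp at this

lemma aemeasurable_of_map {Ω : Type*} [MeasureSpace Ω] {X : Ω → ℝ}
    (hX : Measure.map X ℙ = gumbel) : AEMeasurable X ℙ := by
  by_contra h
  rw [Measure.map_of_not_aemeasurable h] at hX
  exact gumbel_ne_zero hX.symm

lemma gumbel_prob {Ω : Type*} [MeasureSpace Ω] [IsProbabilityMeasure (ℙ : Measure Ω)]
    {X : Ω → ℝ} (hX : Measure.map X ℙ = gumbel) : IsProbabilityMeasure gumbel := by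
  rw [← hX]
  exact Measure.isProbabilityMeasure_map (aemeasurable_of_map hX)

lemma f_integrable {Ω : Type*} [MeasureSpace Ω] [IsProbabilityMeasure (ℙ : Measure Ω)]
    {X : Ω → ℝ} (hX : Measure.map X ℙ = gumbel) : Integrable f := by
  have hp := gumbel_prob hX
  refine ⟨f_cont.aestronglyMeasurable, ?_⟩
  rw [hasFiniteIntegral_iff_ofReal (Filter.Eventually.of_forall fun x => (f_pos x).le)]
  have h1 : gumbel Set.univ = 1 := hp.measure_univ
  rw [gumbel, withDensity_apply _ MeasurableSet.univ, setLIntegral_univ] at h1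
  rw [h1]
  exact ENNReal.one_lt_top

/-- Antiderivative of the Gumbel density. -/
lemma hasDerivAt_F (x : ℝ) :
    HasDerivAt (fun x => Real.exp (-Real.exp (-x))) (f x) x := by
  have h1 : HasDerivAt (fun x : ℝ => -Real.exp (-x)) (Real.exp (-x)) x := by
    have := ((Real.hasDerivAt_exp (-x)).comp x (hasDerivAt_neg x)).neg
    exact this.congr_deriv (by ring)
  have := (Real.hasDerivAt_exp (-Real.exp (-x))).comp x h1
  refine this.congr_deriv ?_
  rw [f, ← Real.exp_add]
  ring_nf

lemma tendsto_F_bot : Tendsto (fun x => Real.exp (-Real.exp (-x))) atBot (nhds 0) := by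
  have h1 : Tendsto (fun x : ℝ => -Real.exp (-x)) atBot atBot := by
    apply Filter.Tendsto.comp tendsto_neg_atTop_atBot
    exact Real.tendsto_exp_atTop.comp tendsto_neg_atBot_atTop
  exact Real.tendsto_exp_atBot.comp h1

lemma cdf_eq {Ω : Type*} [MeasureSpace Ω] [IsProbabilityMeasure (ℙ : Measure Ω)]
    {X : Ω → ℝ} (hX : Measure.map X ℙ = gumbel) (s : ℝ) :
    ∫ x in Iic s, f x = Real.exp (-Real.exp (-s)) := by
  have := integral_Iic_of_hasDerivAt_of_tendsto' (f := fun x => Real.exp (-Real.exp (-x)))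
    (f' := f) (a := s) (m := 0) (fun x _ => hasDerivAt_F x)
    ((f_integrable hX).integrableOn) tendsto_F_bot
  rw [this]; ring

lemma gumbel_Iic {Ω : Type*} [MeasureSpace Ω] [IsProbabilityMeasure (ℙ : Measure Ω)]
    {X : Ω → ℝ} (hX : Measure.map X ℙ = gumbel) (s : ℝ) :
    gumbel (Iic s) = ENNReal.ofReal (Real.exp (-Real.exp (-s))) := by
  rw [gumbel, withDensity_apply _ measurableSet_Iic, ← cdf_eq hX s,
    ofReal_integral_eq_lintegral_ofReal ((f_integrable hX).integrableOn)
      (Filter.Eventually.of_forall fun x => (f_pos x).le)]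

lemma key_integral {Ω : Type*} [MeasureSpace Ω] [IsProbabilityMeasure (ℙ : Measure Ω)]
    {X : Ω → ℝ} (hX : Measure.map X ℙ = gumbel) (t : ℝ) :
    ∫ y, Real.exp (-Real.exp (-(t + y))) * f y = 1 / (1 + Real.exp (-t)) := by
  set a : ℝ := 1 + Real.exp (-t) with ha
  have ha0 : 0 < a := by positivity
  set c : ℝ := 1 / a with hc
  have hca : c * a = 1 := one_div_mul_cancel ha0.ne'
  -- the antiderivative
  set F : ℝ → ℝ := fun y => c * Real.exp (-a * Real.exp (-y)) with hF
  have hderiv : ∀ y : ℝ, HasDerivAt F (Real.exp (-Real.exp (-(t + y))) * f y) y := by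
    intro y
    have h1 : HasDerivAt (fun y : ℝ => -a * Real.exp (-y)) (a * Real.exp (-y)) y := by
      have := ((Real.hasDerivAt_exp (-y)).comp y (hasDerivAt_neg y)).const_mul (-a)
      exact this.congr_deriv (by ring)
    have h2 := ((Real.hasDerivAt_exp (-a * Real.exp (-y))).comp y h1).const_mul c
    refine h2.congr_deriv ?_
    have e1 : Real.exp (-Real.exp (-(t + y))) * f y
        = Real.exp (-a * Real.exp (-y)) * Real.exp (-y) := by
      rw [f, ← Real.exp_add, ← Real.exp_add]
      congr 1
      rw [show -(t + y) = -t + -y by ring, Real.exp_add, ha]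
      ring
    rw [e1, show c * (Real.exp (-a * Real.exp (-y)) * (a * Real.exp (-y)))
      = (c * a) * (Real.exp (-a * Real.exp (-y)) * Real.exp (-y)) by ring, hca, one_mul]
  have hint : Integrable (fun y => Real.exp (-Real.exp (-(t + y))) * f y) := by
    apply (f_integrable hX).mono
    · apply Continuous.aestronglyMeasurable; unfold f; fun_prop
    · refine Filter.Eventually.of_forall fun y => ?_
      rw [Real.norm_eq_abs, Real.norm_eq_abs, abs_of_nonneg (f_pos y).le,
        abs_of_nonneg (mul_nonneg (Real.exp_pos _).le (f_pos y).le)]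
      nth_rewrite 2 [← one_mul (f y)]
      have hle : Real.exp (-Real.exp (-(t + y))) ≤ 1 := by
        rw [← Real.exp_zero]
        exact Real.exp_le_exp.mpr (neg_nonpos.mpr (Real.exp_pos _).le)
      exact mul_le_mul_of_nonneg_right hle (f_pos y).le
  have hexp_top : Tendsto (fun y : ℝ => Real.exp (-y)) atTop (nhds 0) :=
    Real.tendsto_exp_atBot.comp tendsto_neg_atTop_atBot
  have htop : Tendsto F atTop (nhds c) := by
    have h0 : Tendsto (fun y : ℝ => -a * Real.exp (-y)) atTop (nhds 0) := by
      simpa using hexp_top.const_mul (-a)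
    have := ((Real.continuous_exp.tendsto 0).comp h0).const_mul c
    simpa [hF, neg_mul] using this
  have hbot : Tendsto F atBot (nhds 0) := by
    have hexp_bot : Tendsto (fun y : ℝ => Real.exp (-y)) atBot atTop :=
      Real.tendsto_exp_atTop.comp tendsto_neg_atBot_atTop
    have h0 : Tendsto (fun y : ℝ => -a * Real.exp (-y)) atBot atBot :=
      (hexp_bot.const_mul_atTop_of_neg (by linarith : -a < 0))
    have := (Real.tendsto_exp_atBot.comp h0).const_mul c
    simpa [hF, neg_mul] using this
  have := integral_of_hasDerivAt_of_tendsto hderiv hint hbot htop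
  rw [this]; simp [hc]

end Stmt10Aux

open Stmt10Aux in
/-- If `X, Y` are independent random variables on a probability space, each
distributed according to the standard Gumbel distribution (the measure on `ℝ` with density
`x ↦ exp(−x − exp(−x))` with respect to Lebesgue measure), then `X − Y` follows the
`Logistic(0,1)` distribution: `P(X − Y ≤ t) = 1/(1 + exp(−t))` for every `t`. -/
theorem stmt10 {Ω : Type*} [MeasureSpace Ω] [IsProbabilityMeasure (ℙ : Measure Ω)]
    (X Y : Ω → ℝ) (hXY : IndepFun X Y ℙ)
    (hX : Measure.map X ℙ =
      volume.withDensity (fun x => ENNReal.ofReal (Real.exp (-x - Real.exp (-x)))))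
    (hY : Measure.map Y ℙ =
      volume.withDensity (fun x => ENNReal.ofReal (Real.exp (-x - Real.exp (-x))))) :
    ∀ t : ℝ, ℙ {ω | X ω - Y ω ≤ t} = ENNReal.ofReal (1 / (1 + Real.exp (-t))) := by
  intro t
  have hX' : Measure.map X ℙ = gumbel := hX
  have hY' : Measure.map Y ℙ = gumbel := hY
  have hXae := aemeasurable_of_map hX'
  have hYae := aemeasurable_of_map hY'
  have hgp : IsProbabilityMeasure gumbel := gumbel_prob hX'
  have hpair : Measure.map (fun ω => (X ω, Y ω)) ℙ = gumbel.prod gumbel := by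
    rw [(indepFun_iff_map_prod_eq_prod_map_map hXae hYae).mp hXY, hX', hY']
  have hS : MeasurableSet {p : ℝ × ℝ | p.1 - p.2 ≤ t} :=
    measurableSet_le (by fun_prop) measurable_const
  have h1 : ℙ {ω | X ω - Y ω ≤ t}
      = (gumbel.prod gumbel) {p : ℝ × ℝ | p.1 - p.2 ≤ t} := by
    rw [← hpair, Measure.map_apply_of_aemeasurable (hXae.prodMk hYae) hS]
    rfl
  rw [h1, Measure.prod_apply_symm hS]
  have h2 : ∀ y : ℝ, ((fun x => (x, y)) ⁻¹' {p : ℝ × ℝ | p.1 - p.2 ≤ t}) = Iic (t + y) := by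
    intro y; ext x; simp [sub_le_iff_le_add']
  have h3 : ∫⁻ y, gumbel ((fun x => (x, y)) ⁻¹' {p : ℝ × ℝ | p.1 - p.2 ≤ t}) ∂gumbel
      = ∫⁻ y, ENNReal.ofReal (Real.exp (-Real.exp (-(t + y)))) ∂gumbel := by
    apply lintegral_congr
    intro y
    rw [h2 y, gumbel_Iic hX']
  rw [h3, gumbel, lintegral_withDensity_eq_lintegral_mul _ f_meas
    (by fun_prop : Measurable fun y : ℝ => ENNReal.ofReal (Real.exp (-Real.exp (-(t + y)))))]
  have h4 : ∀ y : ℝ, (ENNReal.ofReal (f y)) * ENNReal.ofReal (Real.exp (-Real.exp (-(t + y))))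
      = ENNReal.ofReal (Real.exp (-Real.exp (-(t + y))) * f y) := by
    intro y
    rw [ENNReal.ofReal_mul (Real.exp_pos _).le, mul_comm]
  simp_rw [Pi.mul_apply, h4]
  rw [← ofReal_integral_eq_lintegral_ofReal]
  · rw [key_integral hX' t]
  · apply (f_integrable hX').mono
    · apply Continuous.aestronglyMeasurable; unfold f; fun_prop
    · refine Filter.Eventually.of_forall fun y => ?_
      rw [Real.norm_eq_abs, Real.norm_eq_abs, abs_of_nonneg (f_pos y).le,
        abs_of_nonneg (mul_nonneg (Real.exp_pos _).le (f_pos y).le)]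
      nth_rewrite 2 [← one_mul (f y)]
      have hle : Real.exp (-Real.exp (-(t + y))) ≤ 1 := by
        rw [← Real.exp_zero]
        exact Real.exp_le_exp.mpr (neg_nonpos.mpr (Real.exp_pos _).le)
      exact mul_le_mul_of_nonneg_right hle (f_pos y).le
  · exact Filter.Eventually.of_forall fun y =>
      mul_nonneg (Real.exp_pos _).le (f_pos y).le
end
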